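/- For every α ∈ (π/(2√3), 1) there exists a unique β ∈ (√3/2, 1) such that (1/(√3 β²))·(π/2 − 3·arccos(β) + 3β·√(1−β²)) = α. -/

import Mathlib

open Real

noncomputable def covf (x : ℝ) : ℝ :=
  (1 / (Real.sqrt 3 * x ^ 2)) *
    (π / 2 - 3 * Real.arccos x + 3 * x * Real.sqrt (1 - x ^ 2))

lemma sqrt3_pos : (0:ℝ) < Real.sqrt 3 := Real.sqrt_pos.2 (by norm_num)

lemma sqrt3_half_le_one : Real.sqrt 3 / 2 ≤ 1 := by
  rw [div_le_one (by norm_num)]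
  nlinarith [Real.sq_sqrt (show (0:ℝ) ≤ 3 by norm_num), sqrt3_pos]

lemma covf_hasDerivAt {x : ℝ} (hx0 : 0 < x) (hx1 : x < 1) :
    HasDerivAt covf ((6 * Real.arccos x - π) / (Real.sqrt 3 * x ^ 3)) x := by
  have h1x : 0 < 1 - x ^ 2 := by nlinarith
  have hs : Real.sqrt (1 - x ^ 2) ^ 2 = 1 - x ^ 2 := Real.sq_sqrt h1x.le
  have hs0 : 0 < Real.sqrt (1 - x ^ 2) := Real.sqrt_pos.2 h1x
  have hden : HasDerivAt (fun y : ℝ => Real.sqrt 3 * y ^ 2) (Real.sqrt 3 * (2 * x)) x := by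
    simpa using ((hasDerivAt_pow 2 x).const_mul (Real.sqrt 3))
  have hdne : Real.sqrt 3 * x ^ 2 ≠ 0 := by positivity
  have hinv : HasDerivAt (fun y : ℝ => (Real.sqrt 3 * y ^ 2)⁻¹)
      (-(Real.sqrt 3 * (2 * x)) / (Real.sqrt 3 * x ^ 2) ^ 2) x := hden.inv hdne
  have hq : HasDerivAt (fun y : ℝ => 1 - y ^ 2) (-(2 * x)) x := by
    simpa using (hasDerivAt_pow 2 x).const_sub 1
  have hsqrt : HasDerivAt (fun y : ℝ => Real.sqrt (1 - y ^ 2))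
      (-(2 * x) / (2 * Real.sqrt (1 - x ^ 2))) x := hq.sqrt h1x.ne'
  have harccos : HasDerivAt Real.arccos (-(1 / Real.sqrt (1 - x ^ 2))) x :=
    Real.hasDerivAt_arccos (by linarith) (by linarith)
  have hg : HasDerivAt (fun y : ℝ => π / 2 - 3 * Real.arccos y + 3 * y * Real.sqrt (1 - y ^ 2))
      ((0 - 3 * -(1 / Real.sqrt (1 - x ^ 2))) +
        (3 * 1 * Real.sqrt (1 - x ^ 2) + 3 * x * (-(2 * x) / (2 * Real.sqrt (1 - x ^ 2))))) x := by
    have := ((hasDerivAt_const x (π/2)).fun_sub (harccos.const_mul 3)).fun_add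
      ((((hasDerivAt_id x).const_mul 3)).fun_mul hsqrt)
    simpa using this
  have heq : covf = fun y : ℝ => (Real.sqrt 3 * y ^ 2)⁻¹ *
      (π / 2 - 3 * Real.arccos y + 3 * y * Real.sqrt (1 - y ^ 2)) := by
    funext y; unfold covf; rw [one_div]
  rw [heq]
  refine (hinv.fun_mul hg).congr_deriv ?_
  symm
  have h3 : Real.sqrt 3 ≠ 0 := sqrt3_pos.ne'
  field_simp
  ring_nf
  linear_combination (3 * x) * hs

lemma covf_continuousOn : ContinuousOn covf (Set.Icc (Real.sqrt 3 / 2) 1) := by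
  have h32 : (0:ℝ) < Real.sqrt 3 / 2 := by positivity
  apply ContinuousOn.mul
  · apply ContinuousOn.div continuousOn_const (by fun_prop)
    intro x hx
    have : 0 < x := lt_of_lt_of_le h32 hx.1
    positivity
  · exact (by continuity : Continuous fun x : ℝ =>
      π / 2 - 3 * Real.arccos x + 3 * x * Real.sqrt (1 - x ^ 2)).continuousOn

lemma arccos_sqrt3_half : Real.arccos (Real.sqrt 3 / 2) = π / 6 := by
  rw [← Real.cos_pi_div_six]
  exact Real.arccos_cos (by positivity) (by linarith [Real.pi_gt_three])

lemma covf_strictAntiOn : StrictAntiOn covf (Set.Icc (Real.sqrt 3 / 2) 1) := by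
  have h32 : (0:ℝ) < Real.sqrt 3 / 2 := by positivity
  refine strictAntiOn_of_deriv_neg (convex_Icc _ _) covf_continuousOn ?_
  intro x hx
  rw [interior_Icc] at hx
  have hx0 : 0 < x := lt_trans h32 hx.1
  have hx1 : x < 1 := hx.2
  rw [(covf_hasDerivAt hx0 hx1).deriv]
  apply div_neg_of_neg_of_pos
  · have : Real.arccos x < π / 6 := by
      rw [← arccos_sqrt3_half]
      exact Real.strictAntiOn_arccos
        ⟨by linarith, sqrt3_half_le_one⟩ ⟨by linarith, hx1.le⟩ hx.1
    linarith
  · positivity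

lemma covf_left : covf (Real.sqrt 3 / 2) = 1 := by
  have h3 : Real.sqrt 3 ^ 2 = 3 := Real.sq_sqrt (by norm_num)
  have hsq : (1 : ℝ) - (Real.sqrt 3 / 2) ^ 2 = 1/4 := by
    rw [div_pow, h3]; norm_num
  have h14 : Real.sqrt (1/4 : ℝ) = 1/2 := by
    rw [show (1/4 : ℝ) = (1/2)^2 by norm_num, Real.sqrt_sq (by norm_num)]
  unfold covf
  rw [arccos_sqrt3_half, hsq, h14]
  have h30 : Real.sqrt 3 ≠ 0 := sqrt3_pos.ne'
  field_simp
  linear_combination (-6 * Real.sqrt 3) * h3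

lemma covf_right : covf 1 = π / (2 * Real.sqrt 3) := by
  unfold covf
  simp [Real.arccos_one]
  ring

theorem coverage_fraction_bijective (α : ℝ) (hα : α ∈ Set.Ioo (π / (2 * Real.sqrt 3)) 1) :
    ∃! β : ℝ, β ∈ Set.Ioo (Real.sqrt 3 / 2) 1 ∧
      (1 / (Real.sqrt 3 * β ^ 2)) *
        (π / 2 - 3 * Real.arccos β + 3 * β * Real.sqrt (1 - β ^ 2)) = α := by
  have hiv := intermediate_value_Icc' sqrt3_half_le_one covf_continuousOn
  rw [covf_left, covf_right] at hiv
  obtain ⟨β, hβmem, hβval⟩ := hiv ⟨hα.1.le, hα.2.le⟩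
  have hβIoo : β ∈ Set.Ioo (Real.sqrt 3 / 2) 1 := by
    constructor
    · rcases lt_or_eq_of_le hβmem.1 with h | h
      · exact h
      · exfalso; rw [← h, covf_left] at hβval; exact hα.2.ne' hβval
    · rcases lt_or_eq_of_le hβmem.2 with h | h
      · exact h
      · exfalso; rw [h, covf_right] at hβval; exact hα.1.ne hβval
  refine ⟨β, ⟨hβIoo, hβval⟩, ?_⟩
  rintro γ ⟨hγIoo, hγval⟩
  exact covf_strictAntiOn.injOn ⟨hγIoo.1.le, hγIoo.2.le⟩ ⟨hβIoo.1.le, hβIoo.2.le⟩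
    (by rw [show covf γ = α from hγval, show covf β = α from hβval])
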